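/- Let x ∈ ℝ, let (hₙ) be a sequence of positive reals with hₙ → 0 and n·hₙ → ∞, and let f̂ₙ(x) = (1/(n hₙ)) Σ_{i=1}^n K((x − Xᵢ)/hₙ) be the naive kernel density estimator. Then n·hₙ·Var(f̂ₙ(x)) → f(x) · ∫_ℝ K(z)² dz as n → ∞. (Hence Var[f̂(x)] = f(x)(∫K²)/(nh) + O(1/n).) -/

import Mathlib

open MeasureTheory Filter Topology ProbabilityTheory
open scoped NNReal ENNReal

lemma kde_key_integral {Ω : Type*} [MeasurableSpace Ω] (μ : Measure Ω)
    {X0 : Ω → ℝ} (hX : Measurable X0)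
    {f : ℝ → ℝ} (hf0 : ∀ y, 0 ≤ f y) (hfmeas : Measurable f)
    (hdens : Measure.map X0 μ = volume.withDensity (fun y => ENNReal.ofReal (f y)))
    (x : ℝ) {h : ℝ} (hh : 0 < h) (g : ℝ → ℝ) (hg : Measurable g) :
    ∫ ω, g ((x - X0 ω) / h) ∂μ = h * ∫ z, f (x - h * z) * g z := by
  have hmg : Measurable fun y : ℝ => g ((x - y) / h) :=
    hg.comp ((measurable_const.sub measurable_id).div_const h)
  have h1 : ∫ ω, g ((x - X0 ω) / h) ∂μ
      = ∫ y, g ((x - y) / h) ∂(Measure.map X0 μ) :=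
    (integral_map hX.aemeasurable hmg.aestronglyMeasurable).symm
  rw [h1, hdens]
  have hdeq : (fun y => ENNReal.ofReal (f y))
      = fun y => ((Real.toNNReal (f y) : ℝ≥0) : ℝ≥0∞) := rfl
  rw [hdeq, integral_withDensity_eq_integral_smul hfmeas.real_toNNReal]
  have h2 : ∀ y : ℝ, (Real.toNNReal (f y) : ℝ≥0) • g ((x - y) / h)
      = f y * g ((x - y) / h) := by
    intro y
    simp [NNReal.smul_def, Real.coe_toNNReal _ (hf0 y)]
  simp_rw [h2]
  have h3 : ∫ y : ℝ, f y * g ((x - y) / h)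
      = ∫ u : ℝ, f (x - u) * g (u / h) := by
    rw [← integral_sub_left_eq_self (fun u : ℝ => f (x - u) * g (u / h)) volume x]
    congr 1
    funext y
    simp
  rw [h3]
  have h4 : (fun u : ℝ => f (x - u) * g (u / h))
      = fun u : ℝ => (fun z : ℝ => f (x - h * z) * g z) (u / h) := by
    funext u
    simp [mul_div_cancel₀, hh.ne']
  rw [h4, MeasureTheory.Measure.integral_comp_div (fun z : ℝ => f (x - h * z) * g z) h,
    abs_of_pos hh, smul_eq_mul]


/-- Asymptotic variance of the naive kernel density estimator:
for an i.i.d. sample `X₁, X₂, …` with bounded density `f` continuous at `x`,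
a bounded measurable kernel density `K`, and bandwidths `hₙ → 0` with
`n hₙ → ∞`, the naive estimator `f̂ₙ(x) = (1/(n hₙ)) Σᵢ K((x − Xᵢ)/hₙ)`
satisfies `n hₙ Var(f̂ₙ(x)) → f(x) ∫ K²`. -/
theorem naive_density_variance_asymptotics
    {Ω : Type*} [MeasurableSpace Ω] (μ : Measure Ω) [IsProbabilityMeasure μ]
    (X : ℕ → Ω → ℝ) (hXmeas : ∀ i, Measurable (X i))
    (hindep : iIndepFun X μ)
    (hident : ∀ i, Measure.map (X i) μ = Measure.map (X 0) μ)
    (f : ℝ → ℝ) (hf0 : ∀ y, 0 ≤ f y)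
    (hfbdd : ∃ C, ∀ y, f y ≤ C) (hfmeas : Measurable f)
    (hdens : Measure.map (X 0) μ = volume.withDensity (fun y => ENNReal.ofReal (f y)))
    (K : ℝ → ℝ) (hK0 : ∀ z, 0 ≤ K z) (hKint : Integrable K)
    (hK1 : (∫ z, K z) = 1) (hKmeas : Measurable K)
    (hKbdd : ∃ C, ∀ z, K z ≤ C)
    (x : ℝ) (hfcont : ContinuousAt f x)
    (h : ℕ → ℝ) (hpos : ∀ n, 0 < h n)
    (hto0 : Tendsto h atTop (nhds 0))
    (hnh : Tendsto (fun n : ℕ => (n : ℝ) * h n) atTop atTop) :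
    Tendsto
      (fun n : ℕ => (n : ℝ) * h n *
        variance (fun ω => (1 / ((n : ℝ) * h n)) *
          ∑ i ∈ Finset.range n, K ((x - X i ω) / h n)) μ)
      atTop (nhds (f x * ∫ z, (K z) ^ 2)) := by
  obtain ⟨Cf, hCf⟩ := hfbdd
  obtain ⟨CK, hCK⟩ := hKbdd
  have hCf0 : 0 ≤ Cf := le_trans (hf0 x) (hCf x)
  have hK2meas : Measurable fun z : ℝ => (K z) ^ 2 := hKmeas.pow_const 2
  have hK2int : Integrable (fun z : ℝ => (K z) ^ 2) := by
    refine (hKint.const_mul CK).mono' hK2meas.aestronglyMeasurable ?_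
    filter_upwards with z
    rw [Real.norm_eq_abs, abs_of_nonneg (sq_nonneg _), sq]
    exact mul_le_mul_of_nonneg_right (hCK z) (hK0 z)
  set I₁ : ℕ → ℝ := fun n => ∫ z, f (x - h n * z) * K z with hI₁
  set I₂ : ℕ → ℝ := fun n => ∫ z, f (x - h n * z) * (K z) ^ 2 with hI₂
  -- eventual identity
  have hident' : ∀ (gg : ℝ → ℝ), Measurable gg → ∀ i,
      ∫ ω, gg (X i ω) ∂μ = ∫ ω, gg (X 0 ω) ∂μ := by
    intro gg hgg i
    rw [← integral_map (hXmeas i).aemeasurable hgg.aestronglyMeasurable, hident i,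
      integral_map (hXmeas 0).aemeasurable hgg.aestronglyMeasurable]
  have heq : ∀ n : ℕ, 1 ≤ n →
      (n : ℝ) * h n *
        variance (fun ω => (1 / ((n : ℝ) * h n)) *
          ∑ i ∈ Finset.range n, K ((x - X i ω) / h n)) μ
      = I₂ n - h n * (I₁ n) ^ 2 := by
    intro n hn1
    have hhn : 0 < h n := hpos n
    have hn0 : (0 : ℝ) < n := by exact_mod_cast hn1
    set g : ℝ → ℝ := fun y => K ((x - y) / h n) with hg
    have hgmeas : Measurable g :=
      hKmeas.comp ((measurable_const.sub measurable_id).div_const _)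
    set Y : ℕ → Ω → ℝ := fun i ω => g (X i ω) with hY
    have hYmeas : ∀ i, Measurable (Y i) := fun i => hgmeas.comp (hXmeas i)
    have hYmem : ∀ i, MemLp (Y i) 2 μ := by
      intro i
      refine memLp_of_bounded (a := 0) (b := CK) ?_ (hYmeas i).aestronglyMeasurable 2
      filter_upwards with ω
      exact ⟨hK0 _, hCK _⟩
    have hYindep : iIndepFun Y μ :=
      hindep.comp (fun _ => g) (fun _ => hgmeas)
    have hsum : variance (∑ i ∈ Finset.range n, Y i) μ
        = ∑ i ∈ Finset.range n, variance (Y i) μ := by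
      refine IndepFun.variance_sum (fun i _ => hYmem i) ?_
      intro i _ j _ hij
      exact hYindep.indepFun hij
    have hVareq : ∀ i, variance (Y i) μ = variance (Y 0) μ := by
      intro i
      rw [variance_eq_sub (hYmem i), variance_eq_sub (hYmem 0)]
      have e1 : μ[(Y i) ^ 2] = μ[(Y 0) ^ 2] := by
        have := hident' (fun y => (g y) ^ 2) (hgmeas.pow_const 2) i
        simpa [hY] using this
      have e2 : μ[Y i] = μ[Y 0] := hident' g hgmeas i
      rw [e1, e2]
    have hVsum : variance (∑ i ∈ Finset.range n, Y i) μ = (n : ℝ) * variance (Y 0) μ := by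
      rw [hsum]
      simp [hVareq, Finset.sum_const, nsmul_eq_mul]
    have hE1 : μ[Y 0] = h n * I₁ n := by
      have := kde_key_integral μ (hXmeas 0) hf0 hfmeas hdens x hhn K hKmeas
      simpa [hY, hg, hI₁] using this
    have hE2 : μ[(Y 0) ^ 2] = h n * I₂ n := by
      have := kde_key_integral μ (hXmeas 0) hf0 hfmeas hdens x hhn
        (fun z => (K z) ^ 2) hK2meas
      simpa [hY, hg, hI₂] using this
    have hV0 : variance (Y 0) μ = h n * I₂ n - (h n * I₁ n) ^ 2 := by
      rw [variance_eq_sub (hYmem 0), hE1, hE2]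
    have hfun : (fun ω => (1 / ((n : ℝ) * h n)) *
          ∑ i ∈ Finset.range n, K ((x - X i ω) / h n))
        = fun ω => (1 / ((n : ℝ) * h n)) * (∑ i ∈ Finset.range n, Y i) ω := by
      funext ω
      simp [hY, hg, Finset.sum_apply]
    rw [hfun, variance_const_mul, hVsum, hV0]
    field_simp
  have hmain : Tendsto (fun n : ℕ => I₂ n - h n * (I₁ n) ^ 2) atTop
      (nhds (f x * ∫ z, (K z) ^ 2)) := by
    have hptw : ∀ z : ℝ, Tendsto (fun n : ℕ => x - h n * z) atTop (nhds x) := by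
      intro z
      have := tendsto_const_nhds (x := x) (f := atTop (α := ℕ)) |>.sub (hto0.mul_const z)
      simpa using this
    have hI₂lim : Tendsto I₂ atTop (nhds (∫ z, f x * (K z) ^ 2)) := by
      refine tendsto_integral_filter_of_dominated_convergence
        (fun z => Cf * (K z) ^ 2) ?_ ?_ (hK2int.const_mul Cf) ?_
      · filter_upwards with n
        exact ((hfmeas.comp ((measurable_const.sub (measurable_id.const_mul (h n))))).mul
          hK2meas).aestronglyMeasurable
      · filter_upwards with n
        filter_upwards with z
        rw [Real.norm_eq_abs, abs_of_nonneg (mul_nonneg (hf0 _) (sq_nonneg _))]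
        exact mul_le_mul_of_nonneg_right (hCf _) (sq_nonneg _)
      · filter_upwards with z
        exact ((hfcont.tendsto).comp (hptw z)).mul_const _
    have hI₂lim' : Tendsto I₂ atTop (nhds (f x * ∫ z, (K z) ^ 2)) := by
      rwa [integral_const_mul] at hI₂lim
    have hI₁bdd : ∀ n, I₁ n ∈ Set.Icc (0 : ℝ) Cf := by
      intro n
      constructor
      · exact integral_nonneg fun z => mul_nonneg (hf0 _) (hK0 _)
      · have : I₁ n ≤ ∫ z, Cf * K z := by
          refine integral_mono_of_nonneg ?_ (hKint.const_mul Cf) ?_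
          · filter_upwards with z
            exact mul_nonneg (hf0 _) (hK0 _)
          · filter_upwards with z
            exact mul_le_mul_of_nonneg_right (hCf _) (hK0 _)
        rwa [integral_const_mul, hK1, mul_one] at this
    have hzero : Tendsto (fun n : ℕ => h n * (I₁ n) ^ 2) atTop (nhds 0) := by
      have hb : Tendsto (fun n : ℕ => h n * Cf ^ 2) atTop (nhds 0) := by
        simpa using hto0.mul_const (Cf ^ 2)
      refine squeeze_zero (fun n => ?_) (fun n => ?_) hb
      · exact mul_nonneg (hpos n).le (sq_nonneg _)
      · refine mul_le_mul_of_nonneg_left ?_ (hpos n).le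
        exact pow_le_pow_left₀ (hI₁bdd n).1 (hI₁bdd n).2 2
    simpa using hI₂lim'.sub hzero
  refine Tendsto.congr' ?_ hmain
  filter_upwards [eventually_ge_atTop 1] with n hn
  exact (heq n hn).symm
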